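/- Let D be a set and let g : D → {F,U,T}. Define forall(g) = T if g(d)=T for all d, forall(g) = F if g(d)=F for some d, and forall(g) = U otherwise. Then forall(g) ≠ U if and only if (g(d) ≠ U for all d) or (g(d) = F for some d). -/
import Mathlib


inductive TV | F | U | T
deriving DecidableEq

def tneg : TV → TV
  | .F => .T
  | .U => .U
  | .T => .F

def tand : TV → TV → TV
  | .F, _ => .F
  | _, .F => .F
  | .U, _ => .U
  | _, .U => .U
  | .T, .T => .T

def tor : TV → TV → TV
  | .T, _ => .T
  | _, .T => .T
  | .U, _ => .U
  | _, .U => .U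
  | .F, .F => .F

def timp : TV → TV → TV
  | .F, _ => .T
  | .T, q => q
  | .U, .F => .U
  | .U, .U => .T
  | .U, .T => .T

def tstar : TV → TV
  | .U => .F
  | _ => .T

def tisdef : TV → TV
  | .U => .F
  | _ => .T

open Classical in
/-- Three-valued universal quantification over a domain D. -/
noncomputable def tforall {D : Type*} (g : D → TV) : TV :=
  if ∀ d, g d = TV.T then .T else if ∃ d, g d = TV.F then .F else .U

/-- Semantic correctness of the isdef-formula for ∀. -/
theorem isdef_forall {D : Type*} (g : D → TV) :
    tforall g ≠ .U ↔ (∀ d, g d ≠ .U) ∨ ∃ d, g d = .F := by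
  unfold tforall
  constructor
  · intro h
    by_cases h1 : ∀ d, g d = TV.T
    · exact Or.inl fun d => by rw [h1 d]; simp
    · by_cases h2 : ∃ d, g d = TV.F
      · exact Or.inr h2
      · simp [h1, h2] at h
  · rintro (h | h)
    · split
      · simp
      next h1 =>
        push_neg at h1
        obtain ⟨d, hd⟩ := h1
        have hf : g d = TV.F := by cases hg : g d <;> simp_all
        rw [if_pos ⟨d, hf⟩]; simp
    · split
      · simp
      · simp [h]
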